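/- For any distance-based k-committee voting rule g with issue-wise inter-committee vote and any number of voters n, the supremum over m of AR_{n,m}(g) is at least AR_{n,1}(k-sortition); moreover this already holds with m = n! issues. -/

import Mathlib

open Finset BigOperators

noncomputable section

/-- Hamming distance between two preference vectors over `m` binary issues. -/
def hamming {m : ℕ} (x y : Fin m → Bool) : ℕ :=
  (Finset.univ.filter fun j => x j ≠ y j).card

/-- Social cost of outcome `z` on profile `X`: sum of Hamming distances. -/
def SC {n m : ℕ} (X : Fin n → Fin m → Bool) (z : Fin m → Bool) : ℕ :=
  ∑ i, hamming (X i) z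

/-- Optimal (minimal) social cost over all outcomes. -/
def optCost {n m : ℕ} (X : Fin n → Fin m → Bool) : ℕ :=
  Finset.univ.inf' Finset.univ_nonempty fun z : Fin m → Bool => SC X z

/-- Number of voters preferring alternative 1 (`true`) on issue `j`. -/
def trueCount {n m : ℕ} (X : Fin n → Fin m → Bool) (j : Fin m) : ℕ :=
  (Finset.univ.filter fun i => X i j = true).card

/-- Number of voters preferring alternative 0 (`false`) on issue `j`. -/
def falseCount {n m : ℕ} (X : Fin n → Fin m → Bool) (j : Fin m) : ℕ :=
  (Finset.univ.filter fun i => X i j = false).card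

/-- Expected social cost of `k`-sortition: a uniformly random committee of size `k`
decides each issue by simple majority, ties broken uniformly at random. -/
def sortitionCost (k : ℕ) {n m : ℕ} (X : Fin n → Fin m → Bool) : ℝ :=
  (∑ C ∈ Finset.powersetCard k (Finset.univ : Finset (Fin n)), ∑ j : Fin m,
      (if k < 2 * (C.filter fun i => X i j = true).card then (falseCount X j : ℝ)
       else if 2 * (C.filter fun i => X i j = true).card < k then (trueCount X j : ℝ)
       else (n : ℝ) / 2)) / (n.choose k : ℝ)

/-- Ratio of an (expected) cost to the optimal cost, with the convention `0/0 = 1`. -/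
def ratio (cost : ℝ) (opt : ℕ) : ℝ := if opt = 0 then 1 else cost / (opt : ℝ)

/-- Worst-case approximation ratio of `k`-sortition over profiles with `n` voters, `m` issues. -/
def sortitionAR (n m k : ℕ) : ℝ :=
  ⨆ X : Fin n → Fin m → Bool, ratio (sortitionCost k X) (optCost X)

/-- The set of committee members of `C` closest (in Hamming distance) to voter `i`. -/
def closestSet {n m : ℕ} (X : Fin n → Fin m → Bool) (C : Finset (Fin n)) (i : Fin n) :
    Finset (Fin n) :=
  C.filter fun c => ∀ c' ∈ C, hamming (X i) (X c) ≤ hamming (X i) (X c')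

/-- Weight of committee member `c`: each voter splits one unit of weight equally among
their closest committee members. -/
def wWeight {n m : ℕ} (X : Fin n → Fin m → Bool) (C : Finset (Fin n)) (c : Fin n) : ℝ :=
  ∑ i : Fin n, if c ∈ closestSet X C i then 1 / ((closestSet X C i).card : ℝ) else 0

/-- Expected social cost of the decision of committee `C` under weighted majority
(per issue, ties broken uniformly). -/
def wCost {n m : ℕ} (X : Fin n → Fin m → Bool) (C : Finset (Fin n)) : ℝ :=
  ∑ j : Fin m,
    (if (∑ c ∈ C.filter (fun c => X c j = false), wWeight X C c)
          < (∑ c ∈ C.filter (fun c => X c j = true), wWeight X C c)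
        then (falseCount X j : ℝ)
     else if (∑ c ∈ C.filter (fun c => X c j = true), wWeight X C c)
          < (∑ c ∈ C.filter (fun c => X c j = false), wWeight X C c)
        then (trueCount X j : ℝ)
     else (n : ℝ) / 2)

/-- Expected social cost of weighted `k`-sortition: uniformly random committee of size `k`,
weighted majority vote per issue. -/
def wSortitionCost (k : ℕ) {n m : ℕ} (X : Fin n → Fin m → Bool) : ℝ :=
  (∑ C ∈ Finset.powersetCard k (Finset.univ : Finset (Fin n)), wCost X C) / (n.choose k : ℝ)

/-- Worst-case approximation ratio of weighted `k`-sortition. -/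
def wSortitionAR (n m k : ℕ) : ℝ :=
  ⨆ X : Fin n → Fin m → Bool, ratio (wSortitionCost k X) (optCost X)


/-- Expected social cost of a `k`-committee rule given by a distribution `μ` over
committees and an issue-wise randomized inter-committee rule `h` (probability of
outcome 1 on each issue as a function of the committee members' votes on it). -/
def genCost {n m : ℕ}
    (μ : (Fin n → Fin m → Bool) → Finset (Fin n) → ℝ)
    (h : (Fin n → Fin m → Bool) → Finset (Fin n) → Fin m → (Fin n → Bool) → ℝ)
    (X : Fin n → Fin m → Bool) : ℝ :=
  ∑ C : Finset (Fin n), μ X C * ∑ j : Fin m,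
    (h X C j (fun i => X i j) * (falseCount X j : ℝ)
      + (1 - h X C j (fun i => X i j)) * (trueCount X j : ℝ))



namespace Stmt19Aux

variable {α : Type*} [Fintype α] [DecidableEq α]

/-- Any injection defined on (the subtype of) a finset extends to a permutation. -/
lemma exists_perm_extend (C : Finset α) (φ : {x // x ∈ C} → α) (hφ : Function.Injective φ) :
    ∃ ρ : Equiv.Perm α, ∀ i : {x // x ∈ C}, ρ i = φ i := by
  classical
  set D : Finset α := Finset.univ.image φ with hD
  have hDcard : D.card = C.card := by
    rw [hD, Finset.card_image_of_injective _ hφ, Finset.card_univ, Fintype.card_coe]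
  let f₁ : {x // x ∈ C} → {x // x ∈ D} := fun i => ⟨φ i, by
    simp [hD, Finset.mem_image]⟩
  have hf₁ : Function.Bijective f₁ := by
    constructor
    · intro i j hij
      exact hφ (congrArg Subtype.val hij)
    · rintro ⟨y, hy⟩
      simp only [hD, Finset.mem_image, Finset.mem_univ, true_and] at hy
      obtain ⟨i, hi⟩ := hy
      exact ⟨i, Subtype.ext hi⟩
  let e₁ : {x // x ∈ C} ≃ {x // x ∈ D} := Equiv.ofBijective f₁ hf₁
  have hcompl : Fintype.card {x // ¬ x ∈ C} = Fintype.card {x // ¬ x ∈ D} := by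
    rw [Fintype.card_subtype_compl, Fintype.card_subtype_compl]
    simp [Fintype.card_coe, hDcard]
  let e₂ : {x // ¬ x ∈ C} ≃ {x // ¬ x ∈ D} := Fintype.equivOfCardEq hcompl
  refine ⟨((Equiv.sumCompl (fun x => x ∈ C)).symm.trans
      ((e₁.sumCongr e₂).trans (Equiv.sumCompl (fun x => x ∈ D)))), ?_⟩
  intro i
  have h1 : (Equiv.sumCompl (fun x => x ∈ C)).symm (i : α) = Sum.inl ⟨(i : α), i.2⟩ :=
    Equiv.sumCompl_symm_apply_of_pos i.2
  simp [Equiv.trans_apply, h1, e₁, Equiv.ofBijective, f₁]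

/-- The number of permutations fixing a finset pointwise. -/
lemma card_stab (C : Finset α) :
    (Finset.univ.filter fun π : Equiv.Perm α => ∀ i ∈ C, π i = i).card
      = Nat.factorial (Fintype.card α - C.card) := by
  classical
  rw [← Fintype.card_subtype]
  have e : {π : Equiv.Perm α // ∀ i ∈ C, π i = i} ≃ Equiv.Perm {x // ¬ x ∈ C} := by
    refine (Equiv.subtypeEquivRight ?_).trans
      (Equiv.Perm.subtypeEquivSubtypePerm (fun x => ¬ x ∈ C)).symm
    intro π
    constructor
    · intro hπ a ha
      exact hπ a (not_not.mp ha)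
    · intro hπ a ha
      exact hπ a (not_not.mpr ha)
  rw [Fintype.card_congr e, Fintype.card_perm, Fintype.card_subtype_compl, Fintype.card_coe]

/-- Count of injective functions with values in a given predicate class. -/
lemma card_inj_into {β : Type*} [Fintype β] [DecidableEq β] (p : α → Prop) [DecidablePred p] :
    (Finset.univ.filter fun f : β → α => Function.Injective f ∧ ∀ i, p (f i)).card
      = (Finset.univ.filter p).card.descFactorial (Fintype.card β) := by
  classical
  rw [← Fintype.card_subtype]
  have e : {f : β → α // Function.Injective f ∧ ∀ i, p (f i)} ≃ (β ↪ {x // p x}) := by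
    refine ⟨fun f => ⟨fun i => ⟨f.1 i, f.2.2 i⟩, fun i j hij => f.2.1 (congrArg Subtype.val hij)⟩,
      fun e => ⟨fun i => (e i : α), ?_, fun i => (e i).2⟩, fun f => rfl, fun e => ?_⟩
    · intro i j hij
      exact e.injective (Subtype.ext hij)
    · ext i
      rfl
  rw [Fintype.card_congr e, Fintype.card_embedding_eq, Fintype.card_subtype]

end Stmt19Aux

namespace Stmt19Aux
variable {α : Type*} [Fintype α] [DecidableEq α]

lemma card_coset (C : Finset α) (φ : {x // x ∈ C} → α) (hφ : Function.Injective φ) :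
    (Finset.univ.filter fun ρ : Equiv.Perm α => ∀ i : {x // x ∈ C}, ρ i = φ i).card
      = Nat.factorial (Fintype.card α - C.card) := by
  classical
  obtain ⟨ρ₀, hρ₀⟩ := exists_perm_extend C φ hφ
  rw [← card_stab C]
  apply Finset.card_equiv (Equiv.mulLeft ρ₀⁻¹)
  intro ρ
  simp only [Finset.mem_filter, Finset.mem_univ, true_and, Equiv.coe_mulLeft]
  constructor
  · intro hρ x hx
    rw [Equiv.Perm.mul_apply, hρ ⟨x, hx⟩, ← hρ₀ ⟨x, hx⟩]
    exact Equiv.symm_apply_apply _ _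
  · intro hρ i
    have := hρ (i : α) i.2
    rw [Equiv.Perm.mul_apply] at this
    have h2 : ρ (i : α) = ρ₀ (i : α) := by
      have := congrArg ρ₀ this
      rwa [Equiv.Perm.inv_def, Equiv.apply_symm_apply] at this
    rw [h2, hρ₀]

/-- The master counting lemma: the number of permutations `ρ` such that the pattern
`Y₀ ∘ ρ` on `C` is prescribed by membership in `S ⊆ C`. -/
lemma card_pattern (Y₀ : α → Bool) (C S : Finset α) (hS : S ⊆ C) :
    (Finset.univ.filter fun ρ : Equiv.Perm α => ∀ i ∈ C, Y₀ (ρ i) = decide (i ∈ S)).card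
      = ((Finset.univ.filter fun x => Y₀ x = true).card.descFactorial S.card)
        * ((Finset.univ.filter fun x => Y₀ x = false).card.descFactorial (C \ S).card)
        * Nat.factorial (Fintype.card α - C.card) := by
  classical
  set B₁ : Finset ({x // x ∈ S} → α) :=
    Finset.univ.filter fun f => Function.Injective f ∧ ∀ i, Y₀ (f i) = true with hB₁
  set B₂ : Finset ({x // x ∈ C \ S} → α) :=
    Finset.univ.filter fun g => Function.Injective g ∧ ∀ i, Y₀ (g i) = false with hB₂
  have maps : ∀ ρ ∈ (Finset.univ.filter fun ρ : Equiv.Perm α =>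
      ∀ i ∈ C, Y₀ (ρ i) = decide (i ∈ S)),
      ((fun i : {x // x ∈ S} => ρ (i : α)), (fun i : {x // x ∈ C \ S} => ρ (i : α))) ∈
        B₁ ×ˢ B₂ := by
    intro ρ hρ
    simp only [Finset.mem_filter, Finset.mem_univ, true_and] at hρ
    rw [Finset.mem_product]
    constructor
    · rw [hB₁, Finset.mem_filter]
      refine ⟨Finset.mem_univ _, fun i j hij => Subtype.ext (ρ.injective hij), fun i => ?_⟩
      rw [hρ (i : α) (hS i.2)]
      simp [i.2]
    · rw [hB₂, Finset.mem_filter]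
      refine ⟨Finset.mem_univ _, fun i j hij => Subtype.ext (ρ.injective hij), fun i => ?_⟩
      have hi := i.2
      rw [Finset.mem_sdiff] at hi
      rw [hρ (i : α) hi.1]
      simp [hi.2]
  rw [Finset.card_eq_sum_card_fiberwise maps]
  have fib : ∀ fg ∈ B₁ ×ˢ B₂,
      ((Finset.univ.filter fun ρ : Equiv.Perm α => ∀ i ∈ C, Y₀ (ρ i) = decide (i ∈ S)).filter
        fun ρ => ((fun i : {x // x ∈ S} => ρ (i : α)), (fun i : {x // x ∈ C \ S} => ρ (i : α)))
          = fg).card = Nat.factorial (Fintype.card α - C.card) := by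
    rintro ⟨f, g⟩ hfg
    rw [Finset.mem_product, hB₁, hB₂, Finset.mem_filter, Finset.mem_filter] at hfg
    obtain ⟨⟨-, hf_inj, hf_val⟩, ⟨-, hg_inj, hg_val⟩⟩ := hfg
    dsimp only at hf_inj hf_val hg_inj hg_val
    set φc : {x // x ∈ C} → α := fun i =>
      if h : (i : α) ∈ S then f ⟨i, h⟩
      else g ⟨i, Finset.mem_sdiff.mpr ⟨i.2, h⟩⟩ with hφc
    have hφc_inj : Function.Injective φc := by
      intro i j hij
      simp only [hφc] at hij
      by_cases hi : (i : α) ∈ S <;> by_cases hj : (j : α) ∈ S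
      · simp only [dif_pos hi, dif_pos hj] at hij
        have h2 : ((⟨(i : α), hi⟩ : {x // x ∈ S}) : α) = ((⟨(j : α), hj⟩ : {x // x ∈ S}) : α) :=
          congrArg Subtype.val (hf_inj hij)
        exact Subtype.ext h2
      · exfalso
        simp only [dif_pos hi, dif_neg hj] at hij
        have h1 := hf_val ⟨(i : α), hi⟩
        rw [hij, hg_val] at h1
        simp at h1
      · exfalso
        simp only [dif_neg hi, dif_pos hj] at hij
        have h1 := hf_val ⟨(j : α), hj⟩
        rw [← hij, hg_val] at h1
        simp at h1
      · simp only [dif_neg hi, dif_neg hj] at hij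
        have h2 : ((⟨(i : α), _⟩ : {x // x ∈ C \ S}) : α)
            = ((⟨(j : α), _⟩ : {x // x ∈ C \ S}) : α) :=
          congrArg Subtype.val (hg_inj hij)
        exact Subtype.ext h2
    have filter_eq : ((Finset.univ.filter fun ρ : Equiv.Perm α =>
        ∀ i ∈ C, Y₀ (ρ i) = decide (i ∈ S)).filter
        fun ρ => ((fun i : {x // x ∈ S} => ρ (i : α)), (fun i : {x // x ∈ C \ S} => ρ (i : α)))
          = (f, g))
        = Finset.univ.filter fun ρ : Equiv.Perm α => ∀ i : {x // x ∈ C}, ρ i = φc i := by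
      ext ρ
      simp only [Finset.mem_filter, Finset.mem_univ, true_and, Prod.mk.injEq]
      constructor
      · rintro ⟨-, h1, h2⟩ i
        simp only [hφc]
        by_cases hi : (i : α) ∈ S
        · simp only [dif_pos hi]
          exact congrFun h1 ⟨i, hi⟩
        · simp only [dif_neg hi]
          exact congrFun h2 ⟨i, Finset.mem_sdiff.mpr ⟨i.2, hi⟩⟩
      · intro hall
        refine ⟨fun x hx => ?_, funext fun i => ?_, funext fun i => ?_⟩
        · have hx2 := hall ⟨x, hx⟩
          simp only [hφc] at hx2
          by_cases hxs : x ∈ S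
          · rw [hx2]
            simp only [dif_pos hxs, hf_val ⟨x, hxs⟩]
            simp [hxs]
          · rw [hx2]
            simp only [dif_neg hxs, hg_val ⟨x, Finset.mem_sdiff.mpr ⟨hx, hxs⟩⟩]
            simp [hxs]
        · have hx2 := hall ⟨(i : α), hS i.2⟩
          simp only [hφc, dif_pos i.2] at hx2
          simpa using hx2
        · have hi := i.2
          rw [Finset.mem_sdiff] at hi
          have hx2 := hall ⟨(i : α), hi.1⟩
          simp only [hφc] at hx2
          rw [hx2, dif_neg hi.2]
    rw [filter_eq, card_coset C φc hφc_inj]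
  rw [Finset.sum_congr rfl fib, Finset.sum_const, Finset.card_product, smul_eq_mul]
  rw [hB₁, hB₂, card_inj_into (fun x => Y₀ x = true), card_inj_into (fun x => Y₀ x = false),
    Fintype.card_coe, Fintype.card_coe]
end Stmt19Aux

namespace Stmt19Aux
variable {α : Type*} [Fintype α] [DecidableEq α]

lemma descFactorial_cross {a b : ℕ} (s : ℕ) (hab : a ≤ b) :
    ∀ d, a.descFactorial (s + d) * b.descFactorial s
      ≤ a.descFactorial s * b.descFactorial (s + d) := by
  intro d
  induction d with
  | zero => rw [Nat.add_zero, mul_comm]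
  | succ d ih =>
    rw [← Nat.add_assoc, Nat.descFactorial_succ, Nat.descFactorial_succ]
    calc (a - (s + d)) * a.descFactorial (s + d) * b.descFactorial s
        = (a - (s + d)) * (a.descFactorial (s + d) * b.descFactorial s) := by ring
      _ ≤ (b - (s + d)) * (a.descFactorial s * b.descFactorial (s + d)) :=
          Nat.mul_le_mul (Nat.sub_le_sub_right hab _) ih
      _ = a.descFactorial s * ((b - (s + d)) * b.descFactorial (s + d)) := by ring

lemma cross_le {a b s t : ℕ} (hab : a ≤ b) (hst : s ≤ t) :
    a.descFactorial t * b.descFactorial s ≤ a.descFactorial s * b.descFactorial t := by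
  obtain ⟨d, rfl⟩ := Nat.exists_eq_add_of_le hst
  exact descFactorial_cross s hab d

lemma count_identity (n k t a b : ℕ) (hkn : k ≤ n) (htk : t ≤ k) :
    n.choose k * (Nat.choose k t
        * (a.descFactorial t * (b.descFactorial (k - t) * Nat.factorial (n - k))))
      = Nat.factorial n * (a.choose t * b.choose (k - t)) := by
  rw [Nat.descFactorial_eq_factorial_mul_choose, Nat.descFactorial_eq_factorial_mul_choose]
  have h1 := Nat.choose_mul_factorial_mul_factorial htk
  have h2 := Nat.choose_mul_factorial_mul_factorial hkn
  calc n.choose k * (Nat.choose k t * ((Nat.factorial t * a.choose t)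
          * ((Nat.factorial (k - t) * b.choose (k - t)) * Nat.factorial (n - k))))
      = (n.choose k * (Nat.choose k t * Nat.factorial t * Nat.factorial (k - t))
          * Nat.factorial (n - k)) * (a.choose t * b.choose (k - t)) := by ring
    _ = (n.choose k * Nat.factorial k * Nat.factorial (n - k))
          * (a.choose t * b.choose (k - t)) := by rw [h1]
    _ = Nat.factorial n * (a.choose t * b.choose (k - t)) := by rw [h2]

lemma card_committees (Y₀ : α → Bool) (k t : ℕ) (htk : t ≤ k) :
    ((Finset.powersetCard k (Finset.univ : Finset α)).filter
        fun D => (D.filter fun i => Y₀ i = true).card = t).card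
      = (Finset.univ.filter fun x => Y₀ x = true).card.choose t
        * (Finset.univ.filter fun x => Y₀ x = false).card.choose (k - t) := by
  classical
  rw [← Finset.card_powersetCard, ← Finset.card_powersetCard, ← Finset.card_product]
  refine Finset.card_bij'
    (fun D _ => (D.filter fun i => Y₀ i = true, D.filter fun i => Y₀ i = false))
    (fun PQ _ => PQ.1 ∪ PQ.2) ?hi ?hj ?left ?right
  case hi =>
    intro D hD
    simp only [Finset.mem_filter, Finset.mem_powersetCard] at hD
    obtain ⟨⟨-, hDcard⟩, hDt⟩ := hD
    have hsplit := Finset.card_filter_add_card_filter_not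
      (s := D) (p := fun i => Y₀ i = true)
    have hEq : D.filter (fun a => ¬ Y₀ a = true) = D.filter (fun i => Y₀ i = false) := by
      apply Finset.filter_congr
      intro x _
      cases Y₀ x <;> simp
    rw [hEq] at hsplit
    rw [Finset.mem_product, Finset.mem_powersetCard, Finset.mem_powersetCard]
    refine ⟨⟨fun x hx => ?_, hDt⟩, fun x hx => ?_, ?_⟩
    · simp only [Finset.mem_filter] at hx ⊢
      exact ⟨Finset.mem_univ _, hx.2⟩
    · simp only [Finset.mem_filter] at hx ⊢
      exact ⟨Finset.mem_univ _, hx.2⟩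
    · dsimp only
      omega
  case hj =>
    rintro ⟨P, Q⟩ hPQ
    rw [Finset.mem_product, Finset.mem_powersetCard, Finset.mem_powersetCard] at hPQ
    obtain ⟨⟨hPT, hPcard⟩, hQF, hQcard⟩ := hPQ
    dsimp only at hPT hPcard hQF hQcard ⊢
    have hPv : ∀ x ∈ P, Y₀ x = true := fun x hx => (Finset.mem_filter.mp (hPT hx)).2
    have hQv : ∀ x ∈ Q, Y₀ x = false := fun x hx => (Finset.mem_filter.mp (hQF hx)).2
    have hdisj : Disjoint P Q := by
      rw [Finset.disjoint_left]
      intro x hxP hxQ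
      have hb := hPv x hxP
      rw [hQv x hxQ] at hb
      exact Bool.noConfusion hb
    have hfP : (P ∪ Q).filter (fun i => Y₀ i = true) = P := by
      rw [Finset.filter_union, Finset.filter_true_of_mem hPv, Finset.filter_false_of_mem
        (fun x hx => by rw [hQv x hx]; simp), Finset.union_empty]
    rw [Finset.mem_filter, Finset.mem_powersetCard]
    refine ⟨⟨Finset.subset_univ _, ?_⟩, by rw [hfP, hPcard]⟩
    rw [Finset.card_union_of_disjoint hdisj, hPcard, hQcard]
    omega
  case left =>
    intro D hD
    dsimp only
    rw [← Finset.filter_or, Finset.filter_true_of_mem]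
    intro x _
    cases Y₀ x <;> simp
  case right =>
    rintro ⟨P, Q⟩ hPQ
    rw [Finset.mem_product, Finset.mem_powersetCard, Finset.mem_powersetCard] at hPQ
    obtain ⟨⟨hPT, hPcard⟩, hQF, hQcard⟩ := hPQ
    dsimp only at hPT hPcard hQF hQcard ⊢
    have hPv : ∀ x ∈ P, Y₀ x = true := fun x hx => (Finset.mem_filter.mp (hPT hx)).2
    have hQv : ∀ x ∈ Q, Y₀ x = false := fun x hx => (Finset.mem_filter.mp (hQF hx)).2
    have hfP : (P ∪ Q).filter (fun i => Y₀ i = true) = P := by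
      rw [Finset.filter_union, Finset.filter_true_of_mem hPv, Finset.filter_false_of_mem
        (fun x hx => by rw [hQv x hx]; simp), Finset.union_empty]
    have hfQ : (P ∪ Q).filter (fun i => Y₀ i = false) = Q := by
      rw [Finset.filter_union, Finset.filter_false_of_mem
        (fun x hx => by rw [hPv x hx]; simp), Finset.filter_true_of_mem hQv,
        Finset.empty_union]
    rw [hfP, hfQ]
end Stmt19Aux


namespace Stmt19Aux
variable {α : Type*} [Fintype α] [DecidableEq α]

/-- The key inequality: any local voting rule `q`, applied to a uniformly random
arrangement and (paired with) its complement, does at least as badly on average as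
committee majority voting. -/
lemma key_lemma (Y₀ : α → Bool) (C : Finset α) (k : ℕ) (hk : C.card = k)
    (q : (α → Bool) → ℝ) (hq0 : ∀ v, 0 ≤ q v) (hq1 : ∀ v, q v ≤ 1)
    (hql : ∀ v v', (∀ i ∈ C, v i = v' i) → q v = q v') :
    2 * ∑ ρ : Equiv.Perm α,
        (if k < 2 * (C.filter fun i => Y₀ (ρ i) = true).card
          then ((Finset.univ.filter fun x => Y₀ x = false).card : ℝ)
          else if 2 * (C.filter fun i => Y₀ (ρ i) = true).card < k
          then ((Finset.univ.filter fun x => Y₀ x = true).card : ℝ)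
          else (Fintype.card α : ℝ) / 2)
      ≤ ∑ ρ : Equiv.Perm α,
        ((q (fun i => Y₀ (ρ i)) * ((Finset.univ.filter fun x => Y₀ x = false).card : ℝ)
          + (1 - q (fun i => Y₀ (ρ i))) * ((Finset.univ.filter fun x => Y₀ x = true).card : ℝ))
          + (q (fun i => !(Y₀ (ρ i))) * ((Finset.univ.filter fun x => Y₀ x = true).card : ℝ)
          + (1 - q (fun i => !(Y₀ (ρ i)))) *
              ((Finset.univ.filter fun x => Y₀ x = false).card : ℝ))) := by
  classical
  set a := (Finset.univ.filter fun x => Y₀ x = true).card with ha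
  set b := (Finset.univ.filter fun x => Y₀ x = false).card with hb
  have hab : a + b = Fintype.card α := by
    have h1 := Finset.card_filter_add_card_filter_not
      (s := (Finset.univ : Finset α)) (p := fun x => Y₀ x = true)
    have h2 : (Finset.univ.filter fun x => ¬ Y₀ x = true) =
        (Finset.univ.filter fun x => Y₀ x = false) := by
      apply Finset.filter_congr; intro x _; cases Y₀ x <;> simp
    rw [h2] at h1
    rw [ha, hb, h1, Finset.card_univ]
  set M := Nat.factorial (Fintype.card α - k) with hM
  set U : Equiv.Perm α → Finset α := fun ρ => C.filter fun i => Y₀ (ρ i) = true with hU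
  set Q : Finset α → ℝ := fun S => q (fun i => decide (i ∈ S)) with hQdef
  have hv1 : ∀ ρ : Equiv.Perm α, q (fun i => Y₀ (ρ i)) = Q (U ρ) := by
    intro ρ
    apply hql
    intro i hi
    cases hY : Y₀ (ρ i) <;> simp [hU, Finset.mem_filter, hi, hY]
  have hv2 : ∀ ρ : Equiv.Perm α, q (fun i => !(Y₀ (ρ i))) = Q (C \ U ρ) := by
    intro ρ
    apply hql
    intro i hi
    cases hY : Y₀ (ρ i) <;> simp [hU, Finset.mem_filter, Finset.mem_sdiff, hi, hY]
  set A : Finset α → ℕ := fun S => (Finset.univ.filter fun ρ : Equiv.Perm α => U ρ = S).card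
    with hA
  have sum_fiber : ∀ F : Finset α → ℝ,
      ∑ ρ : Equiv.Perm α, F (U ρ) = ∑ S ∈ C.powerset, (A S : ℝ) * F S := by
    intro F
    rw [← Finset.sum_fiberwise_of_maps_to (g := U) (t := C.powerset)
      (fun ρ _ => Finset.mem_powerset.mpr (Finset.filter_subset _ _)) (fun ρ => F (U ρ))]
    refine Finset.sum_congr rfl fun S hS => ?_
    have hconst : ∀ ρ ∈ Finset.univ.filter fun ρ : Equiv.Perm α => U ρ = S,
        F (U ρ) = F S := by
      intro ρ hρ
      rw [(Finset.mem_filter.mp hρ).2]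
    rw [Finset.sum_congr rfl hconst, Finset.sum_const, nsmul_eq_mul]
  set cc : Finset α → ℝ := fun S =>
    if k < 2 * S.card then (b : ℝ) else if 2 * S.card < k then (a : ℝ)
    else (Fintype.card α : ℝ) / 2 with hcc
  set G : Finset α → ℝ := fun S =>
    (Q S * b + (1 - Q S) * a) + (Q (C \ S) * a + (1 - Q (C \ S)) * b) with hG
  have lhs_eq : ∑ ρ : Equiv.Perm α,
      (if k < 2 * (C.filter fun i => Y₀ (ρ i) = true).card then (b : ℝ)
        else if 2 * (C.filter fun i => Y₀ (ρ i) = true).card < k then (a : ℝ)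
        else (Fintype.card α : ℝ) / 2)
      = ∑ S ∈ C.powerset, (A S : ℝ) * cc S := by
    rw [← sum_fiber cc]
  have rhs_eq : ∑ ρ : Equiv.Perm α,
      ((q (fun i => Y₀ (ρ i)) * (b : ℝ) + (1 - q (fun i => Y₀ (ρ i))) * (a : ℝ))
        + (q (fun i => !(Y₀ (ρ i))) * (a : ℝ) + (1 - q (fun i => !(Y₀ (ρ i)))) * (b : ℝ)))
      = ∑ S ∈ C.powerset, (A S : ℝ) * G S := by
    rw [← sum_fiber G]
    refine Finset.sum_congr rfl fun ρ _ => ?_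
    rw [hG]
    simp only [hv1 ρ, hv2 ρ]
  rw [lhs_eq, rhs_eq]
  -- the A-formula
  have hAval : ∀ S ∈ C.powerset, A S = a.descFactorial S.card
      * b.descFactorial (C \ S).card * M := by
    intro S hS
    rw [Finset.mem_powerset] at hS
    have hfe : (Finset.univ.filter fun ρ : Equiv.Perm α => U ρ = S)
        = Finset.univ.filter fun ρ : Equiv.Perm α => ∀ i ∈ C, Y₀ (ρ i) = decide (i ∈ S) := by
      apply Finset.filter_congr
      intro ρ _
      constructor
      · intro hUS
        intro i hi
        cases hY : Y₀ (ρ i)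
        · have : i ∉ S := by
            rw [← hUS, hU]
            simp [Finset.mem_filter, hY]
          simp [this]
        · have : i ∈ S := by
            rw [← hUS, hU]
            simp [Finset.mem_filter, hi, hY]
          simp [this]
      · intro hpat
        ext x
        rw [hU]
        simp only [Finset.mem_filter]
        constructor
        · rintro ⟨hxC, hY⟩
          have := hpat x hxC
          rw [hY] at this
          exact of_decide_eq_true this.symm
        · intro hxS
          refine ⟨hS hxS, ?_⟩
          rw [hpat x (hS hxS)]
          simp [hxS]
    simp only [hA]
    rw [hfe, card_pattern Y₀ C S hS, hk]
  -- reflection over the pairing S ↔ C \ S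
  have reflect : ∀ F : Finset α → ℝ,
      ∑ S ∈ C.powerset, F S = ∑ S ∈ C.powerset, F (C \ S) := by
    intro F
    refine Finset.sum_nbij' (fun S => C \ S) (fun S => C \ S) ?_ ?_ ?_ ?_ ?_
    · intro S hS
      exact Finset.mem_powerset.mpr (Finset.sdiff_subset)
    · intro S hS
      exact Finset.mem_powerset.mpr (Finset.sdiff_subset)
    · intro S hS
      exact Finset.sdiff_sdiff_eq_self (Finset.mem_powerset.mp hS)
    · intro S hS
      exact Finset.sdiff_sdiff_eq_self (Finset.mem_powerset.mp hS)
    · intro S hS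
      rw [Finset.sdiff_sdiff_eq_self (Finset.mem_powerset.mp hS)]
  -- the per-pair inequality
  have key : ∀ S ∈ C.powerset,
      0 ≤ (A S : ℝ) * (G S - 2 * cc S) + (A (C \ S) : ℝ) * (G (C \ S) - 2 * cc (C \ S)) := by
    intro S hSmem
    have hS : S ⊆ C := Finset.mem_powerset.mp hSmem
    have hCS : C \ (C \ S) = S := Finset.sdiff_sdiff_eq_self hS
    set t := S.card with ht
    have htk : t ≤ k := hk ▸ Finset.card_le_card hS
    have hcst : (C \ S).card = k - t := by rw [Finset.card_sdiff_of_subset hS, hk]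
    have hAS : A S = a.descFactorial t * b.descFactorial (k - t) * M := by
      rw [hAval S hSmem, hcst]
    have hACS : A (C \ S) = a.descFactorial (k - t) * b.descFactorial t * M := by
      rw [hAval (C \ S) (Finset.mem_powerset.mpr Finset.sdiff_subset), hCS, hcst]
    have hGS : G S = Q S * b + (1 - Q S) * a + (Q (C \ S) * a + (1 - Q (C \ S)) * b) := rfl
    have hGCS : G (C \ S) = Q (C \ S) * b + (1 - Q (C \ S)) * a + (Q S * a + (1 - Q S) * b) := by
      rw [hG]
      simp only [hCS]
    set x := Q S with hx
    set y := Q (C \ S) with hy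
    have hx0 : 0 ≤ x := hq0 _
    have hx1 : x ≤ 1 := hq1 _
    have hy0 : 0 ≤ y := hq0 _
    have hy1 : y ≤ 1 := hq1 _
    rcases lt_trichotomy (2 * t) k with h2 | h2 | h2
    · -- minority of trues: cc S = a, cc (C\S) = b
      have hccS : cc S = (a : ℝ) := by
        simp only [hcc, ← ht]
        rw [if_neg (by omega), if_pos h2]
      have hccCS : cc (C \ S) = (b : ℝ) := by
        simp only [hcc, hcst]
        rw [if_pos (by omega)]
      rw [hccS, hccCS, hGS, hGCS]
      have heq : (A S : ℝ) * (x * b + (1 - x) * a + (y * a + (1 - y) * b) - 2 * a)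
          + (A (C \ S) : ℝ) * (y * b + (1 - y) * a + (x * a + (1 - x) * b) - 2 * b)
          = ((b : ℝ) - a) * ((A S : ℝ) - (A (C \ S) : ℝ)) * (1 + x - y) := by ring
      rw [heq]
      have hfac : (0:ℝ) ≤ 1 + x - y := by linarith
      rcases le_total a b with hle | hle
      · have hcnt : A (C \ S) ≤ A S := by
          rw [hAS, hACS]
          exact Nat.mul_le_mul_right M (cross_le hle (by omega))
        have h1 : (0:ℝ) ≤ (b : ℝ) - a := by
          have := Nat.cast_le (α := ℝ).mpr hle; linarith
        have h2' : (0:ℝ) ≤ (A S : ℝ) - (A (C \ S) : ℝ) := by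
          have := Nat.cast_le (α := ℝ).mpr hcnt; linarith
        exact mul_nonneg (mul_nonneg h1 h2') hfac
      · have hcnt : A S ≤ A (C \ S) := by
          rw [hAS, hACS]
          calc a.descFactorial t * b.descFactorial (k - t) * M
              = b.descFactorial (k - t) * a.descFactorial t * M := by ring
            _ ≤ b.descFactorial t * a.descFactorial (k - t) * M := by
                exact Nat.mul_le_mul_right M (cross_le hle (by omega))
            _ = a.descFactorial (k - t) * b.descFactorial t * M := by ring
        have h1 : (b : ℝ) - a ≤ 0 := by
          have := Nat.cast_le (α := ℝ).mpr hle; linarith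
        have h2' : (A S : ℝ) - (A (C \ S) : ℝ) ≤ 0 := by
          have := Nat.cast_le (α := ℝ).mpr hcnt; linarith
        have hp : (0:ℝ) ≤ (-((b : ℝ) - a)) * (-((A S : ℝ) - (A (C \ S) : ℝ))) :=
          mul_nonneg (neg_nonneg.mpr h1) (neg_nonneg.mpr h2')
        rw [neg_mul_neg] at hp
        exact mul_nonneg hp hfac
    · -- tie
      have hteq : k - t = t := by omega
      have hccS : cc S = (Fintype.card α : ℝ) / 2 := by
        simp only [hcc, ← ht]
        rw [if_neg (by omega), if_neg (by omega)]
      have hccCS : cc (C \ S) = (Fintype.card α : ℝ) / 2 := by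
        simp only [hcc, hcst]
        rw [if_neg (by omega), if_neg (by omega)]
      have hAeq : A (C \ S) = A S := by
        rw [hAS, hACS, hteq]
      have hNr : (Fintype.card α : ℝ) = (a : ℝ) + b := by
        rw [← hab]
        push_cast
        ring
      rw [hccS, hccCS, hGS, hGCS, hAeq, hNr]
      have heq : (A S : ℝ) * (x * b + (1 - x) * a + (y * a + (1 - y) * b)
            - 2 * (((a:ℝ) + b) / 2))
          + (A S : ℝ) * (y * b + (1 - y) * a + (x * a + (1 - x) * b)
            - 2 * (((a:ℝ) + b) / 2)) = 0 := by ring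
      exact heq.ge
    · -- majority of trues: cc S = b, cc (C\S) = a
      have hccS : cc S = (b : ℝ) := by
        simp only [hcc, ← ht]
        rw [if_pos h2]
      have hccCS : cc (C \ S) = (a : ℝ) := by
        simp only [hcc, hcst]
        rw [if_neg (by omega), if_pos (by omega)]
      rw [hccS, hccCS, hGS, hGCS]
      have heq : (A S : ℝ) * (x * b + (1 - x) * a + (y * a + (1 - y) * b) - 2 * b)
          + (A (C \ S) : ℝ) * (y * b + (1 - y) * a + (x * a + (1 - x) * b) - 2 * a)
          = ((b : ℝ) - a) * ((A (C \ S) : ℝ) - (A S : ℝ)) * (1 - x + y) := by ring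
      rw [heq]
      have hfac : (0:ℝ) ≤ 1 - x + y := by linarith
      rcases le_total a b with hle | hle
      · have hcnt : A S ≤ A (C \ S) := by
          rw [hAS, hACS]
          exact Nat.mul_le_mul_right M (cross_le hle (by omega))
        have h1 : (0:ℝ) ≤ (b : ℝ) - a := by
          have := Nat.cast_le (α := ℝ).mpr hle; linarith
        have h2' : (0:ℝ) ≤ (A (C \ S) : ℝ) - (A S : ℝ) := by
          have := Nat.cast_le (α := ℝ).mpr hcnt; linarith
        exact mul_nonneg (mul_nonneg h1 h2') hfac
      · have hcnt : A (C \ S) ≤ A S := by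
          rw [hAS, hACS]
          calc a.descFactorial (k - t) * b.descFactorial t * M
              = b.descFactorial t * a.descFactorial (k - t) * M := by ring
            _ ≤ b.descFactorial (k - t) * a.descFactorial t * M := by
                exact Nat.mul_le_mul_right M (cross_le hle (by omega))
            _ = a.descFactorial t * b.descFactorial (k - t) * M := by ring
        have h1 : (b : ℝ) - a ≤ 0 := by
          have := Nat.cast_le (α := ℝ).mpr hle; linarith
        have h2' : (A (C \ S) : ℝ) - (A S : ℝ) ≤ 0 := by
          have := Nat.cast_le (α := ℝ).mpr hcnt; linarith
        have hp : (0:ℝ) ≤ (-((b : ℝ) - a)) * (-((A (C \ S) : ℝ) - (A S : ℝ))) :=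
          mul_nonneg (neg_nonneg.mpr h1) (neg_nonneg.mpr h2')
        rw [neg_mul_neg] at hp
        exact mul_nonneg hp hfac
  -- assemble
  have hsum : 0 ≤ ∑ S ∈ C.powerset, ((A S : ℝ) * (G S - 2 * cc S)
      + (A (C \ S) : ℝ) * (G (C \ S) - 2 * cc (C \ S))) :=
    Finset.sum_nonneg key
  have hrefl : ∑ S ∈ C.powerset, (A (C \ S) : ℝ) * (G (C \ S) - 2 * cc (C \ S))
      = ∑ S ∈ C.powerset, (A S : ℝ) * (G S - 2 * cc S) := by
    rw [← reflect (fun S => (A S : ℝ) * (G S - 2 * cc S))]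
  rw [Finset.sum_add_distrib, hrefl] at hsum
  have h0 : 0 ≤ ∑ S ∈ C.powerset, (A S : ℝ) * (G S - 2 * cc S) := by linarith
  have hexp : ∑ S ∈ C.powerset, (A S : ℝ) * (G S - 2 * cc S)
      = ∑ S ∈ C.powerset, (A S : ℝ) * G S - 2 * ∑ S ∈ C.powerset, (A S : ℝ) * cc S := by
    rw [Finset.mul_sum, ← Finset.sum_sub_distrib]
    refine Finset.sum_congr rfl fun S _ => by ring
  rw [hexp] at h0
  linarith

end Stmt19Aux


namespace Stmt19Aux
variable {α : Type*} [Fintype α] [DecidableEq α]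

/-- The number of permutations realizing a given true-pattern `S` on `C`. -/
lemma card_U (Y₀ : α → Bool) (C S : Finset α) (hS : S ⊆ C) :
    (Finset.univ.filter fun ρ : Equiv.Perm α =>
        (C.filter fun i => Y₀ (ρ i) = true) = S).card
      = ((Finset.univ.filter fun x => Y₀ x = true).card.descFactorial S.card)
        * ((Finset.univ.filter fun x => Y₀ x = false).card.descFactorial (C \ S).card)
        * Nat.factorial (Fintype.card α - C.card) := by
  classical
  rw [← card_pattern Y₀ C S hS]
  congr 1
  apply Finset.filter_congr
  intro ρ _
  constructor
  · intro hUS i hi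
    cases hY : Y₀ (ρ i)
    · have hni : i ∉ S := by
        rw [← hUS]
        simp [Finset.mem_filter, hY]
      simp [hni]
    · have hmi : i ∈ S := by
        rw [← hUS]
        simp [Finset.mem_filter, hi, hY]
      simp [hmi]
  · intro hpat
    ext x
    simp only [Finset.mem_filter]
    constructor
    · rintro ⟨hxC, hY⟩
      have := hpat x hxC
      rw [hY] at this
      exact of_decide_eq_true this.symm
    · intro hxS
      refine ⟨hS hxS, ?_⟩
      rw [hpat x (hS hxS)]
      simp [hxS]

/-- Grouping a sum over permutations by the pattern on `C`. -/
lemma sum_fiber_perm (Y₀ : α → Bool) (C : Finset α) (F : Finset α → ℝ) :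
    ∑ ρ : Equiv.Perm α, F (C.filter fun i => Y₀ (ρ i) = true)
      = ∑ S ∈ C.powerset,
          ((Finset.univ.filter fun ρ : Equiv.Perm α =>
            (C.filter fun i => Y₀ (ρ i) = true) = S).card : ℝ) * F S := by
  classical
  rw [← Finset.sum_fiberwise_of_maps_to
    (g := fun ρ : Equiv.Perm α => C.filter fun i => Y₀ (ρ i) = true) (t := C.powerset)
    (fun ρ _ => Finset.mem_powerset.mpr (Finset.filter_subset _ _))
    (fun ρ => F (C.filter fun i => Y₀ (ρ i) = true))]
  refine Finset.sum_congr rfl fun S hS => ?_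
  have hconst : ∀ ρ ∈ Finset.univ.filter fun ρ : Equiv.Perm α =>
      (C.filter fun i => Y₀ (ρ i) = true) = S,
      F (C.filter fun i => Y₀ (ρ i) = true) = F S := by
    intro ρ hρ
    rw [(Finset.mem_filter.mp hρ).2]
  rw [Finset.sum_congr rfl hconst, Finset.sum_const, nsmul_eq_mul]

/-- The sortition identity: for any fixed committee `C` of size `k`, the distribution
of the pattern-size over a random permutation agrees with the hypergeometric
distribution of a random committee. -/
lemma sortition_identity (Y₀ : α → Bool) (C : Finset α) (k : ℕ) (hC : C.card = k)
    (hk : k ≤ Fintype.card α) (F : ℕ → ℝ) :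
    ((Fintype.card α).choose k : ℝ) * ∑ ρ : Equiv.Perm α,
        F ((C.filter fun i => Y₀ (ρ i) = true).card)
      = (Nat.factorial (Fintype.card α) : ℝ) *
          ∑ D ∈ Finset.powersetCard k (Finset.univ : Finset α),
            F ((D.filter fun i => Y₀ i = true).card) := by
  classical
  set a := (Finset.univ.filter fun x => Y₀ x = true).card with ha
  set b := (Finset.univ.filter fun x => Y₀ x = false).card with hb
  -- LHS: group by pattern, then by pattern size
  rw [sum_fiber_perm Y₀ C (fun S => F S.card)]
  have hval : ∀ S ∈ C.powerset,
      ((Finset.univ.filter fun ρ : Equiv.Perm α =>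
        (C.filter fun i => Y₀ (ρ i) = true) = S).card : ℝ) * F S.card
      = ((a.descFactorial S.card * (b.descFactorial (C \ S).card
          * Nat.factorial (Fintype.card α - k)) : ℕ) : ℝ) * F S.card := by
    intro S hS
    rw [card_U Y₀ C S (Finset.mem_powerset.mp hS), hC]
    push_cast
    rw [ha, hb]; ring
  have hstep1 : ∑ S ∈ C.powerset,
      ((Finset.univ.filter fun ρ : Equiv.Perm α =>
        (C.filter fun i => Y₀ (ρ i) = true) = S).card : ℝ) * F S.card
      = ∑ t ∈ Finset.range (k + 1), (Nat.choose k t : ℝ)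
          * (((a.descFactorial t * (b.descFactorial (k - t)
              * Nat.factorial (Fintype.card α - k)) : ℕ) : ℝ) * F t) := by
    rw [Finset.sum_congr rfl hval, Finset.sum_powerset, hC]
    refine Finset.sum_congr rfl fun t _ht => ?_
    have hinner : ∀ S ∈ Finset.powersetCard t C,
        ((a.descFactorial S.card * (b.descFactorial (C \ S).card
          * Nat.factorial (Fintype.card α - k)) : ℕ) : ℝ) * F S.card
        = ((a.descFactorial t * (b.descFactorial (k - t)
            * Nat.factorial (Fintype.card α - k)) : ℕ) : ℝ) * F t := by
      intro S hSmem
      rw [Finset.mem_powersetCard] at hSmem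
      obtain ⟨hSsub, hScard⟩ := hSmem
      rw [hScard, Finset.card_sdiff_of_subset hSsub, hScard, hC]
    rw [Finset.sum_congr rfl hinner, Finset.sum_const, Finset.card_powersetCard, hC,
      nsmul_eq_mul]
  rw [hstep1]
  -- RHS: group committees by intersection size
  have hmapsD : ∀ D ∈ Finset.powersetCard k (Finset.univ : Finset α),
      (D.filter fun i => Y₀ i = true).card ∈ Finset.range (k + 1) := by
    intro D hD
    rw [Finset.mem_powersetCard] at hD
    rw [Finset.mem_range]
    have := Finset.card_filter_le D (fun i => Y₀ i = true)
    omega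
  have hfibD := Finset.sum_fiberwise_of_maps_to (g := fun D : Finset α => (D.filter fun i => Y₀ i = true).card)
    (t := Finset.range (k + 1)) hmapsD
    (fun D : Finset α => F ((D.filter fun i => Y₀ i = true).card))
  rw [← hfibD]
  rw [Finset.mul_sum, Finset.mul_sum]
  refine Finset.sum_congr rfl fun t ht => ?_
  rw [Finset.mem_range] at ht
  have htk : t ≤ k := by omega
  have hDconst : ∀ D ∈ (Finset.powersetCard k (Finset.univ : Finset α)).filter
      fun D => (D.filter fun i => Y₀ i = true).card = t,
      F ((D.filter fun i => Y₀ i = true).card) = F t := by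
    intro D hD
    rw [(Finset.mem_filter.mp hD).2]
  rw [Finset.sum_congr rfl hDconst, Finset.sum_const, card_committees Y₀ k t htk,
    nsmul_eq_mul]
  have hnat := count_identity (Fintype.card α) k t a b hk htk
  have hcast : ((Fintype.card α).choose k : ℝ) *
      ((k.choose t : ℝ) * ((a.descFactorial t : ℝ) * ((b.descFactorial (k - t) : ℝ)
        * (Nat.factorial (Fintype.card α - k) : ℝ))))
      = ((Fintype.card α).factorial : ℝ) * ((a.choose t : ℝ) * (b.choose (k - t) : ℝ)) := by
    exact_mod_cast congrArg (Nat.cast (R := ℝ)) hnat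
  simp only [← ha, ← hb]
  push_cast
  linear_combination (F t) * hcast

end Stmt19Aux

namespace Stmt19Aux

lemma card_filter_perm {β : Type*} [Fintype β] [DecidableEq β] (σ : Equiv.Perm β)
    (p : β → Prop) [DecidablePred p] :
    (Finset.univ.filter fun i => p (σ i)).card = (Finset.univ.filter p).card := by
  apply Finset.card_equiv σ
  intro i
  simp

end Stmt19Aux

lemma SC_eq {n m : ℕ} (X : Fin n → Fin m → Bool) (z : Fin m → Bool) :
    SC X z = ∑ j, (if z j = true then falseCount X j else trueCount X j) := by
  unfold SC hamming
  calc ∑ i, (Finset.univ.filter fun j => X i j ≠ z j).card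
      = ∑ i, ∑ j, (if X i j ≠ z j then 1 else 0) :=
        Finset.sum_congr rfl (fun i _ => Finset.card_filter _ _)
    _ = ∑ j, ∑ i, (if X i j ≠ z j then 1 else 0) := Finset.sum_comm
    _ = ∑ j, (if z j = true then falseCount X j else trueCount X j) := by
        refine Finset.sum_congr rfl fun j _ => ?_
        rw [← Finset.card_filter]
        cases hz : z j
        · rw [if_neg (by simp)]
          unfold trueCount
          congr 1
          apply Finset.filter_congr
          intro i _
          cases X i j <;> simp
        · rw [if_pos rfl]
          unfold falseCount
          congr 1
          apply Finset.filter_congr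
          intro i _
          cases X i j <;> simp

lemma optCost_eq {n m : ℕ} (X : Fin n → Fin m → Bool) :
    optCost X = ∑ j, min (trueCount X j) (falseCount X j) := by
  unfold optCost
  apply le_antisymm
  · refine le_trans (Finset.inf'_le _
      (Finset.mem_univ (fun j => decide (falseCount X j < trueCount X j)))) ?_
    rw [SC_eq]
    apply le_of_eq
    refine Finset.sum_congr rfl fun j _ => ?_
    by_cases hj : falseCount X j < trueCount X j
    · rw [if_pos (by simp [hj]), min_eq_right (le_of_lt hj)]
    · rw [if_neg (by simp [hj]), min_eq_left (le_of_not_gt hj)]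
  · apply Finset.le_inf'
    intro z _
    rw [SC_eq]
    apply Finset.sum_le_sum
    intro j _
    cases hz : z j
    · rw [if_neg (by simp)]
      exact min_le_left _ _
    · rw [if_pos rfl]
      exact min_le_right _ _

/-- Bijection between issue indices and permutations. -/
def pe (n : ℕ) : Fin (Nat.factorial n) ≃ Equiv.Perm (Fin n) :=
  (Fintype.equivFinOfCardEq (by rw [Fintype.card_perm, Fintype.card_fin])).symm

/-- The symmetrized hard profile: issue `j` is the arrangement of the base pattern `Y₀`
by the permutation `pe n j ∘ π`, negated when `s = true`. -/
def Xp (n : ℕ) (Y₀ : Fin n → Bool) (π : Equiv.Perm (Fin n)) (s : Bool)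
    (i : Fin n) (j : Fin (Nat.factorial n)) : Bool :=
  xor (Y₀ ((pe n j) (π i))) s

lemma Xp_trueCount (n : ℕ) (Y₀ : Fin n → Bool) (π : Equiv.Perm (Fin n)) (s : Bool)
    (j : Fin (Nat.factorial n)) :
    trueCount (Xp n Y₀ π s) j
      = (Finset.univ.filter fun x => xor (Y₀ x) s = true).card := by
  unfold trueCount Xp
  exact Stmt19Aux.card_filter_perm ((pe n j) * π) (fun x => xor (Y₀ x) s = true)

lemma Xp_falseCount (n : ℕ) (Y₀ : Fin n → Bool) (π : Equiv.Perm (Fin n)) (s : Bool)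
    (j : Fin (Nat.factorial n)) :
    falseCount (Xp n Y₀ π s) j
      = (Finset.univ.filter fun x => xor (Y₀ x) s = false).card := by
  unfold falseCount Xp
  exact Stmt19Aux.card_filter_perm ((pe n j) * π) (fun x => xor (Y₀ x) s = false)

lemma Xp_hamming (n : ℕ) (Y₀ : Fin n → Bool) (π : Equiv.Perm (Fin n)) (s : Bool)
    (i i' : Fin n) :
    hamming (Xp n Y₀ π s i) (Xp n Y₀ π s i')
      = (Finset.univ.filter fun ρ : Equiv.Perm (Fin n) => Y₀ (ρ i) ≠ Y₀ (ρ i')).card := by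
  unfold hamming Xp
  have h1 : (Finset.univ.filter fun j : Fin (Nat.factorial n) =>
        xor (Y₀ ((pe n j) (π i))) s ≠ xor (Y₀ ((pe n j) (π i'))) s)
      = Finset.univ.filter fun j => Y₀ ((pe n j) (π i)) ≠ Y₀ ((pe n j) (π i')) := by
    apply Finset.filter_congr
    intro j _
    cases s <;> simp
  rw [h1]
  have h2 : (Finset.univ.filter fun j : Fin (Nat.factorial n) =>
        Y₀ ((pe n j) (π i)) ≠ Y₀ ((pe n j) (π i'))).card
      = (Finset.univ.filter fun ρ : Equiv.Perm (Fin n) =>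
          Y₀ (ρ (π i)) ≠ Y₀ (ρ (π i'))).card := by
    apply Finset.card_equiv (pe n)
    intro j
    simp
  rw [h2]
  apply Finset.card_equiv (Equiv.mulRight π)
  intro ρ
  simp [Equiv.Perm.mul_apply]

theorem stmt19 (n k : ℕ) (hk : 1 ≤ k) (hkn : k ≤ n) (hn : 2 ≤ n)
    (μ : (Fin n → Fin n.factorial → Bool) → Finset (Fin n) → ℝ)
    (h : (Fin n → Fin n.factorial → Bool) → Finset (Fin n) → Fin n.factorial →
          (Fin n → Bool) → ℝ)
    (hμ0 : ∀ X C, 0 ≤ μ X C)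
    (hμ1 : ∀ X, ∑ C : Finset (Fin n), μ X C = 1)
    (hμk : ∀ X C, μ X C ≠ 0 → C.card = k)
    (hrange : ∀ X C j v, h X C j v ∈ Set.Icc (0 : ℝ) 1)
    (hlocal : ∀ X C j v v', (∀ i ∈ C, v i = v' i) → h X C j v = h X C j v')
    (hdistμ : ∀ X X', (∀ i i', hamming (X i) (X i') = hamming (X' i) (X' i')) → μ X = μ X')
    (hdisth : ∀ X X', (∀ i i', hamming (X i) (X i') = hamming (X' i) (X' i')) → h X = h X') :
    sortitionAR n 1 k ≤
      ⨆ X : Fin n → Fin n.factorial → Bool, ratio (genCost μ h X) (optCost X) := by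
  classical
  -- uniform bound on the ratios of the general rule (for `BddAbove`)
  have hbddR : ∀ X : Fin n → Fin n.factorial → Bool,
      ratio (genCost μ h X) (optCost X) ≤ max 1 ((n.factorial : ℝ) * n) := by
    intro X
    have hterm : ∀ C : Finset (Fin n), ∀ j : Fin n.factorial,
        0 ≤ h X C j (fun i => X i j) * (falseCount X j : ℝ)
          + (1 - h X C j (fun i => X i j)) * (trueCount X j : ℝ) ∧
        h X C j (fun i => X i j) * (falseCount X j : ℝ)
          + (1 - h X C j (fun i => X i j)) * (trueCount X j : ℝ) ≤ n := by
      intro C j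
      have hr := hrange X C j (fun i => X i j)
      rw [Set.mem_Icc] at hr
      have hf : (falseCount X j : ℝ) ≤ n := by
        have h1 : falseCount X j ≤ n := by
          have := Finset.card_filter_le (Finset.univ : Finset (Fin n)) (fun i => X i j = false)
          simpa [falseCount] using this
        exact_mod_cast h1
      have ht : (trueCount X j : ℝ) ≤ n := by
        have h1 : trueCount X j ≤ n := by
          have := Finset.card_filter_le (Finset.univ : Finset (Fin n)) (fun i => X i j = true)
          simpa [trueCount] using this
        exact_mod_cast h1
      have hf0 : (0:ℝ) ≤ (falseCount X j : ℝ) := Nat.cast_nonneg _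
      have ht0 : (0:ℝ) ≤ (trueCount X j : ℝ) := Nat.cast_nonneg _
      constructor
      · have h2 := mul_nonneg hr.1 hf0
        have h3 := mul_nonneg (by linarith [hr.2] : (0:ℝ) ≤ 1 - h X C j (fun i => X i j)) ht0
        linarith
      · nlinarith [hr.1, hr.2]
    have hcost0 : 0 ≤ genCost μ h X := by
      apply Finset.sum_nonneg
      intro C _
      exact mul_nonneg (hμ0 X C) (Finset.sum_nonneg fun j _ => (hterm C j).1)
    have hcostB : genCost μ h X ≤ (n.factorial : ℝ) * n := by
      calc genCost μ h X
          ≤ ∑ C : Finset (Fin n), μ X C * ((n.factorial : ℝ) * n) := by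
            apply Finset.sum_le_sum
            intro C _
            refine mul_le_mul_of_nonneg_left ?_ (hμ0 X C)
            refine le_trans (Finset.sum_le_sum fun j (_ : j ∈ Finset.univ) => (hterm C j).2) ?_
            rw [Finset.sum_const, Finset.card_univ, Fintype.card_fin, nsmul_eq_mul]
        _ = (n.factorial : ℝ) * n := by rw [← Finset.sum_mul, hμ1 X, one_mul]
    unfold ratio
    split_ifs with hopt
    · exact le_max_left _ _
    · have h1 : (1:ℝ) ≤ (optCost X : ℝ) := by exact_mod_cast Nat.one_le_iff_ne_zero.mpr hopt
      exact le_trans (le_trans (div_le_self hcost0 h1) hcostB) (le_max_right _ _)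
  have hBdd : BddAbove (Set.range fun X : Fin n → Fin n.factorial → Bool =>
      ratio (genCost μ h X) (optCost X)) := by
    refine ⟨max 1 ((n.factorial : ℝ) * n), ?_⟩
    rintro r ⟨X, rfl⟩
    exact hbddR X
  rw [sortitionAR]
  refine ciSup_le fun Y => ?_
  set Y₀ : Fin n → Bool := fun i => Y i 0 with hY₀def
  set aY := (Finset.univ.filter fun x : Fin n => Y₀ x = true).card with haY
  set bY := (Finset.univ.filter fun x : Fin n => Y₀ x = false).card with hbY
  have htcY : trueCount Y 0 = aY := rfl
  have hfcY : falseCount Y 0 = bY := rfl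
  have hoptY : optCost Y = min aY bY := by
    rw [optCost_eq, Fin.sum_univ_one, htcY, hfcY]
  by_cases hmin : min aY bY = 0
  · have hL : ratio (sortitionCost k Y) (optCost Y) = 1 := by
      unfold ratio
      rw [if_pos (by rw [hoptY, hmin])]
    rw [hL]
    have hXc : optCost (fun _ _ => false : Fin n → Fin n.factorial → Bool) = 0 := by
      have hle : optCost (fun _ _ => false : Fin n → Fin n.factorial → Bool)
          ≤ SC (fun _ _ => false) (fun _ => false) := Finset.inf'_le _ (Finset.mem_univ _)
      have hz : SC (fun _ _ => false : Fin n → Fin n.factorial → Bool) (fun _ => false) = 0 := by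
        unfold SC hamming
        simp
      omega
    have h1 : ratio (genCost μ h (fun _ _ => false : Fin n → Fin n.factorial → Bool))
        (optCost (fun _ _ => false : Fin n → Fin n.factorial → Bool)) = 1 := by
      unfold ratio
      rw [if_pos hXc]
    rw [← h1]
    exact le_ciSup hBdd _
  · -- main case: the symmetrized hard instances
    have hminpos : 0 < min aY bY := Nat.pos_of_ne_zero hmin
    set X₀ : Fin n → Fin n.factorial → Bool := Xp n Y₀ 1 false with hX₀
    have hdists : ∀ (π : Equiv.Perm (Fin n)) (s : Bool) (i i' : Fin n),
        hamming (Xp n Y₀ π s i) (Xp n Y₀ π s i') = hamming (X₀ i) (X₀ i') := by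
      intro π s i i'
      rw [hX₀, Xp_hamming, Xp_hamming]
    have hμX : ∀ π s, μ (Xp n Y₀ π s) = μ X₀ :=
      fun π s => hdistμ _ _ (fun i i' => hdists π s i i')
    have hhX : ∀ π s, h (Xp n Y₀ π s) = h X₀ :=
      fun π s => hdisth _ _ (fun i i' => hdists π s i i')
    have htcF : ∀ (π : Equiv.Perm (Fin n)) j, trueCount (Xp n Y₀ π false) j = aY := by
      intro π j
      rw [Xp_trueCount, haY]
      congr 1
      apply Finset.filter_congr
      intro x _
      simp
    have hfcF : ∀ (π : Equiv.Perm (Fin n)) j, falseCount (Xp n Y₀ π false) j = bY := by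
      intro π j
      rw [Xp_falseCount, hbY]
      congr 1
      apply Finset.filter_congr
      intro x _
      simp
    have htcT : ∀ (π : Equiv.Perm (Fin n)) j, trueCount (Xp n Y₀ π true) j = bY := by
      intro π j
      rw [Xp_trueCount, hbY]
      congr 1
      apply Finset.filter_congr
      intro x _
      cases Y₀ x <;> simp
    have hfcT : ∀ (π : Equiv.Perm (Fin n)) j, falseCount (Xp n Y₀ π true) j = aY := by
      intro π j
      rw [Xp_falseCount, haY]
      congr 1
      apply Finset.filter_congr
      intro x _
      cases Y₀ x <;> simp
    have hoptXp : ∀ π s, optCost (Xp n Y₀ π s) = n.factorial * min aY bY := by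
      intro π s
      rw [optCost_eq]
      have hj : ∀ j ∈ (Finset.univ : Finset (Fin n.factorial)),
          min (trueCount (Xp n Y₀ π s) j) (falseCount (Xp n Y₀ π s) j) = min aY bY := by
        intro j _
        cases s
        · rw [htcF, hfcF]
        · rw [htcT, hfcT]
          exact Nat.min_comm _ _
      rw [Finset.sum_congr rfl hj, Finset.sum_const, Finset.card_univ,
        Fintype.card_fin, smul_eq_mul]
    set F : ℕ → ℝ := fun t => if k < 2*t then (bY:ℝ) else if 2*t < k then (aY:ℝ)
      else ((Fintype.card (Fin n)) : ℝ)/2 with hF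
    have hsortY : sortitionCost k Y = (∑ D ∈ Finset.powersetCard k
        (Finset.univ : Finset (Fin n)),
        F ((D.filter fun i => Y₀ i = true).card)) / (n.choose k : ℝ) := by
      unfold sortitionCost
      congr 1
      refine Finset.sum_congr rfl fun D _ => ?_
      rw [Fin.sum_univ_one, hF]
      simp only [Fintype.card_fin]
      rfl
    have hkn' : k ≤ Fintype.card (Fin n) := by rw [Fintype.card_fin]; exact hkn
    have hchoosepos : (0:ℝ) < (n.choose k : ℝ) := by
      exact_mod_cast Nat.choose_pos hkn
    -- the per-committee inequality
    have hC_ineq : ∀ C : Finset (Fin n), C.card = k →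
        2 * ((n.factorial : ℝ) * ((n.factorial : ℝ) * sortitionCost k Y))
        ≤ ∑ πs : Equiv.Perm (Fin n) × Bool, ∑ j : Fin n.factorial,
            (h X₀ C j (fun i => Xp n Y₀ πs.1 πs.2 i j)
                * (falseCount (Xp n Y₀ πs.1 πs.2) j : ℝ)
              + (1 - h X₀ C j (fun i => Xp n Y₀ πs.1 πs.2 i j))
                * (trueCount (Xp n Y₀ πs.1 πs.2) j : ℝ)) := by
      intro C hC
      -- value of Σ_ρ F over patterns, via the sortition identity
      have hsi := Stmt19Aux.sortition_identity (α := Fin n) Y₀ C k hC hkn' F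
      rw [Fintype.card_fin] at hsi
      have hsumF : ∑ ρ : Equiv.Perm (Fin n), F ((C.filter fun i => Y₀ (ρ i) = true).card)
          = (n.factorial : ℝ) * sortitionCost k Y := by
        rw [hsortY, ← mul_div_assoc, eq_div_iff hchoosepos.ne']
        linear_combination hsi
      -- reorganize the double sum
      have hsplit : ∑ πs : Equiv.Perm (Fin n) × Bool, ∑ j : Fin n.factorial,
            (h X₀ C j (fun i => Xp n Y₀ πs.1 πs.2 i j)
                * (falseCount (Xp n Y₀ πs.1 πs.2) j : ℝ)
              + (1 - h X₀ C j (fun i => Xp n Y₀ πs.1 πs.2 i j))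
                * (trueCount (Xp n Y₀ πs.1 πs.2) j : ℝ))
          = ∑ j : Fin n.factorial, ∑ ρ : Equiv.Perm (Fin n),
              ((h X₀ C j (fun i => Y₀ (ρ i)) * (bY : ℝ)
                + (1 - h X₀ C j (fun i => Y₀ (ρ i))) * (aY : ℝ))
              + (h X₀ C j (fun i => !(Y₀ (ρ i))) * (aY : ℝ)
                + (1 - h X₀ C j (fun i => !(Y₀ (ρ i)))) * (bY : ℝ))) := by
        rw [Fintype.sum_prod_type]
        have hb : ∀ π : Equiv.Perm (Fin n), ∑ s : Bool, ∑ j : Fin n.factorial,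
              (h X₀ C j (fun i => Xp n Y₀ π s i j)
                  * (falseCount (Xp n Y₀ π s) j : ℝ)
                + (1 - h X₀ C j (fun i => Xp n Y₀ π s i j))
                  * (trueCount (Xp n Y₀ π s) j : ℝ))
            = ∑ j : Fin n.factorial,
              ((h X₀ C j (fun i => Y₀ ((pe n j) (π i))) * (bY : ℝ)
                + (1 - h X₀ C j (fun i => Y₀ ((pe n j) (π i)))) * (aY : ℝ))
              + (h X₀ C j (fun i => !(Y₀ ((pe n j) (π i)))) * (aY : ℝ)
                + (1 - h X₀ C j (fun i => !(Y₀ ((pe n j) (π i))))) * (bY : ℝ))) := by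
          intro π
          rw [Fintype.sum_bool, ← Finset.sum_add_distrib]
          refine Finset.sum_congr rfl fun j _ => ?_
          rw [htcF, hfcF, htcT, hfcT]
          have e1 : (fun i => Xp n Y₀ π false i j) = fun i => Y₀ ((pe n j) (π i)) := by
            funext i
            simp [Xp]
          have e2 : (fun i => Xp n Y₀ π true i j) = fun i => !(Y₀ ((pe n j) (π i))) := by
            funext i
            simp [Xp]
          rw [e1, e2]
          ring
        rw [Finset.sum_congr rfl (fun π _ => hb π), Finset.sum_comm]
        refine Finset.sum_congr rfl fun j _ => ?_
        exact Fintype.sum_equiv (Equiv.mulLeft (pe n j)) _ _ (fun π => rfl)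
      rw [hsplit]
      -- apply the key lemma for each issue
      have hklem : ∀ j : Fin n.factorial,
          2 * ((n.factorial : ℝ) * sortitionCost k Y)
          ≤ ∑ ρ : Equiv.Perm (Fin n),
              ((h X₀ C j (fun i => Y₀ (ρ i)) * (bY : ℝ)
                + (1 - h X₀ C j (fun i => Y₀ (ρ i))) * (aY : ℝ))
              + (h X₀ C j (fun i => !(Y₀ (ρ i))) * (aY : ℝ)
                + (1 - h X₀ C j (fun i => !(Y₀ (ρ i)))) * (bY : ℝ))) := by
        intro j
        have hkey := Stmt19Aux.key_lemma (α := Fin n) Y₀ C k hC (h X₀ C j)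
          (fun v => (hrange X₀ C j v).1) (fun v => (hrange X₀ C j v).2)
          (fun v v' hvv => hlocal X₀ C j v v' hvv)
        rw [← hsumF]
        exact hkey
      calc 2 * ((n.factorial : ℝ) * ((n.factorial : ℝ) * sortitionCost k Y))
          = ∑ _j : Fin n.factorial, 2 * ((n.factorial : ℝ) * sortitionCost k Y) := by
            rw [Finset.sum_const, Finset.card_univ, Fintype.card_fin, nsmul_eq_mul]
            ring
        _ ≤ _ := Finset.sum_le_sum fun j _ => hklem j
    -- total over the family of profiles
    have htotal : 2 * ((n.factorial : ℝ) * ((n.factorial : ℝ) * sortitionCost k Y))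
        ≤ ∑ πs : Equiv.Perm (Fin n) × Bool, genCost μ h (Xp n Y₀ πs.1 πs.2) := by
      have hgen : ∀ πs : Equiv.Perm (Fin n) × Bool, genCost μ h (Xp n Y₀ πs.1 πs.2)
          = ∑ C : Finset (Fin n), μ X₀ C * ∑ j : Fin n.factorial,
              (h X₀ C j (fun i => Xp n Y₀ πs.1 πs.2 i j)
                  * (falseCount (Xp n Y₀ πs.1 πs.2) j : ℝ)
                + (1 - h X₀ C j (fun i => Xp n Y₀ πs.1 πs.2 i j))
                  * (trueCount (Xp n Y₀ πs.1 πs.2) j : ℝ)) := by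
        intro πs
        unfold genCost
        simp only [hμX πs.1 πs.2, hhX πs.1 πs.2]
      rw [Finset.sum_congr rfl (fun πs _ => hgen πs), Finset.sum_comm]
      have hfold : ∀ C : Finset (Fin n),
          ∑ πs : Equiv.Perm (Fin n) × Bool, μ X₀ C * ∑ j : Fin n.factorial,
              (h X₀ C j (fun i => Xp n Y₀ πs.1 πs.2 i j)
                  * (falseCount (Xp n Y₀ πs.1 πs.2) j : ℝ)
                + (1 - h X₀ C j (fun i => Xp n Y₀ πs.1 πs.2 i j))
                  * (trueCount (Xp n Y₀ πs.1 πs.2) j : ℝ))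
          = μ X₀ C * ∑ πs : Equiv.Perm (Fin n) × Bool, ∑ j : Fin n.factorial,
              (h X₀ C j (fun i => Xp n Y₀ πs.1 πs.2 i j)
                  * (falseCount (Xp n Y₀ πs.1 πs.2) j : ℝ)
                + (1 - h X₀ C j (fun i => Xp n Y₀ πs.1 πs.2 i j))
                  * (trueCount (Xp n Y₀ πs.1 πs.2) j : ℝ)) := by
        intro C
        rw [Finset.mul_sum]
      rw [Finset.sum_congr rfl (fun C _ => hfold C)]
      calc 2 * ((n.factorial : ℝ) * ((n.factorial : ℝ) * sortitionCost k Y))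
          = ∑ C : Finset (Fin n), μ X₀ C
              * (2 * ((n.factorial : ℝ) * ((n.factorial : ℝ) * sortitionCost k Y))) := by
            rw [← Finset.sum_mul, hμ1 X₀, one_mul]
        _ ≤ _ := by
            apply Finset.sum_le_sum
            intro C _
            by_cases hμC : μ X₀ C = 0
            · rw [hμC, zero_mul, zero_mul]
            · exact mul_le_mul_of_nonneg_left (hC_ineq C (hμk X₀ C hμC)) (hμ0 X₀ C)
    -- extract one good profile
    have hsum_const : ∑ _πs : Equiv.Perm (Fin n) × Bool,
          (n.factorial : ℝ) * sortitionCost k Y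
        ≤ ∑ πs : Equiv.Perm (Fin n) × Bool, genCost μ h (Xp n Y₀ πs.1 πs.2) := by
      refine le_trans (le_of_eq ?_) htotal
      rw [Finset.sum_const, Finset.card_univ, Fintype.card_prod, Fintype.card_perm,
        Fintype.card_fin, Fintype.card_bool, nsmul_eq_mul]
      push_cast
      ring
    obtain ⟨πs, -, hbest⟩ := Finset.exists_le_of_sum_le Finset.univ_nonempty hsum_const
    refine le_trans ?_ (le_ciSup hBdd (Xp n Y₀ πs.1 πs.2))
    unfold ratio
    rw [if_neg (by rw [hoptY]; exact hmin), if_neg (by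
      rw [hoptXp πs.1 πs.2]
      exact Nat.mul_ne_zero (Nat.factorial_ne_zero _) hmin)]
    rw [hoptY, hoptXp πs.1 πs.2]
    have hfpos : (0:ℝ) < (n.factorial : ℝ) := by exact_mod_cast Nat.factorial_pos n
    have hmpos : (0:ℝ) < ((min aY bY : ℕ) : ℝ) := by exact_mod_cast hminpos
    have hcast : ((n.factorial * min aY bY : ℕ) : ℝ)
        = (n.factorial : ℝ) * ((min aY bY : ℕ) : ℝ) := by push_cast; ring
    rw [hcast, div_le_div_iff₀ hmpos (by positivity)]
    have hmul := mul_le_mul_of_nonneg_right hbest (le_of_lt hmpos)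
    nlinarith [hmul]

end
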